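/- arXiv:2204.12599 — 3 statements merged into one kernel-verified Lean document; each statement's English description precedes it below -/
import Mathlib

section
/- For any peak Λ ≤ 1/2, in any swap Schelling game (G,b,Λ), no profitable swap can occur between two agents occupying adjacent nodes such that one of them is below the peak and the other is above the peak. -/
open Finset

namespace SwapSchelling

variable {V : Type*} [Fintype V] [DecidableEq V]

open scoped Classical in
/-- The closed neighborhood `N[v]` of a node `v` in `G`, as a `Finset`. -/
noncomputable def closedNbhd (G : SimpleGraph V) (v : V) : Finset V :=
  univ.filter (fun u => u = v ∨ G.Adj v u)

open scoped Classical in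
/-- The degree `δ(v)` of a node `v` in `G`. -/
noncomputable def deg (G : SimpleGraph V) (v : V) : ℕ :=
  (univ.filter (fun u => G.Adj v u)).card

/-- The maximum degree `Δ(G)`. -/
noncomputable def maxDeg (G : SimpleGraph V) : ℕ := univ.sup (deg G)

/-- The minimum degree `δ(G)`. -/
noncomputable def minDeg (G : SimpleGraph V) : ℕ := sInf (Set.range (deg G))

open scoped Classical in
/-- `frac G c v` is the fraction of nodes in the closed neighborhood of `v` that have
the same color as `v` (that is, `f_i(σ)` for the agent `i` occupying node `v`). -/
noncomputable def frac (G : SimpleGraph V) (c : V → Bool) (v : V) : ℝ :=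
  (((closedNbhd G v).filter (fun u => c u = c v)).card : ℝ) / ((closedNbhd G v).card : ℝ)

/-- The coloring obtained from `c` after the agents on nodes `v` and `w` swap positions. -/
def swapColor (c : V → Bool) (v w : V) : V → Bool := c ∘ Equiv.swap v w

/-- A single-peaked utility function `p` with peak at `Λ`: `p 0 = 0`, `p` is strictly
increasing on `[0,Λ]`, `p Λ = 1`, and `p x = p (Λ(1-x)/(1-Λ))` for `x ∈ [Λ,1]`. -/
structure IsSinglePeaked (p : ℝ → ℝ) (Λ : ℝ) : Prop where
  peak_mem : Λ ∈ Set.Ioo (0 : ℝ) 1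
  map_zero : p 0 = 0
  strictMonoOn : StrictMonoOn p (Set.Icc 0 Λ)
  map_peak : p Λ = 1
  symm : ∀ x ∈ Set.Icc Λ 1, p x = p (Λ * (1 - x) / (1 - Λ))

/-- A strategy profile: a 2-coloring of the nodes with exactly `b` blue (`true`) nodes. -/
def IsProfile (c : V → Bool) (b : ℕ) : Prop :=
  (univ.filter (fun v => c v = true)).card = b

/-- The structural data of a swap Schelling game `(G, b, Λ)` with utility function `p`:
`G` is connected, there are `b` blue agents with `1 ≤ b ≤ n/2`, and `p` is a
single-peaked utility function with peak `Λ`. -/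
structure IsGame (G : SimpleGraph V) (b : ℕ) (Λ : ℝ) (p : ℝ → ℝ) : Prop where
  connected : G.Connected
  one_le_b : 1 ≤ b
  b_le_half : 2 * b ≤ Fintype.card V
  singlePeaked : IsSinglePeaked p Λ

/-- The swap of the two (differently colored) agents occupying nodes `v` and `w`
is profitable: both agents strictly increase their utility. -/
def ProfitableSwap (G : SimpleGraph V) (p : ℝ → ℝ) (c : V → Bool) (v w : V) : Prop :=
  c v ≠ c w ∧
  p (frac G (swapColor c v w) w) > p (frac G c v) ∧
  p (frac G (swapColor c v w) v) > p (frac G c w)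

/-- A swap equilibrium: no profitable swap exists. -/
def IsSwapEquilibrium (G : SimpleGraph V) (p : ℝ → ℝ) (c : V → Bool) : Prop :=
  ∀ v w, ¬ ProfitableSwap G p c v w

open scoped Classical in
/-- The degree of integration: the number of non-segregated agents. -/
noncomputable def DoI (G : SimpleGraph V) (c : V → Bool) : ℕ :=
  (univ.filter (fun v => frac G c v ≠ 1)).card

open scoped Classical in
/-- The number of monochromatic edges of `G` under the coloring `c`. -/
noncomputable def Phi (G : SimpleGraph V) (c : V → Bool) : ℕ :=
  (G.edgeFinset.filter (fun e => ∀ u ∈ e, ∀ w ∈ e, c u = c w)).card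

open scoped Classical in
/-- The number of edges of `G`. -/
noncomputable def numEdges (G : SimpleGraph V) : ℕ :=
  (univ.filter (fun e : Sym2 V => e ∈ G.edgeSet)).card

/-- A finset of nodes is an independent set of `G`. -/
def IsIndepSet (G : SimpleGraph V) (s : Finset V) : Prop :=
  ∀ u ∈ s, ∀ w ∈ s, ¬ G.Adj u w

open scoped Classical in
/-- The independence number `α(G)`. -/
noncomputable def indepNum (G : SimpleGraph V) : ℕ :=
  univ.sup (fun s : Finset V => if IsIndepSet G s then s.card else 0)

open scoped Classical in
/-- The degree of `v` inside the subgraph of `G` induced by the node set `s`. -/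
noncomputable def degOn (G : SimpleGraph V) (s : Finset V) (v : V) : ℕ :=
  (s.filter (fun u => G.Adj v u)).card


open scoped Classical in
lemma mem_closedNbhd {G : SimpleGraph V} {v u : V} :
    u ∈ closedNbhd G v ↔ u = v ∨ G.Adj v u := by
  simp [closedNbhd]

open scoped Classical in
lemma closedNbhd_card_pos (G : SimpleGraph V) (v : V) : 0 < (closedNbhd G v).card :=
  Finset.card_pos.2 ⟨v, mem_closedNbhd.2 (Or.inl rfl)⟩

open scoped Classical in
lemma frac_nonneg (G : SimpleGraph V) (c : V → Bool) (v : V) : 0 ≤ frac G c v := by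
  unfold frac; positivity

open scoped Classical in
lemma frac_le_one (G : SimpleGraph V) (c : V → Bool) (v : V) : frac G c v ≤ 1 := by
  rw [frac, div_le_one (by exact_mod_cast closedNbhd_card_pos G v)]
  exact_mod_cast Finset.card_filter_le _ _

open scoped Classical in
lemma frac_swap_adj {G : SimpleGraph V} {c : V → Bool} {v w : V}
    (hadj : G.Adj v w) (hne : c v ≠ c w) :
    frac G (swapColor c v w) w = 1 - frac G c w := by
  have hvw : v ≠ w := hadj.ne
  set s := closedNbhd G w with hs
  have hws : w ∈ s := mem_closedNbhd.2 (Or.inl rfl)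
  have hvs : v ∈ s := mem_closedNbhd.2 (Or.inr hadj.symm)
  have key : s.filter (fun u => swapColor c v w u = swapColor c v w w)
      = insert w ((s.filter (fun u => ¬ c u = c w)).erase v) := by
    ext u
    simp only [Finset.mem_filter, Finset.mem_insert, Finset.mem_erase]
    by_cases huw : u = w
    · subst huw
      simp only [swapColor, Function.comp_apply, Equiv.swap_apply_right]
      tauto
    by_cases huv : u = v
    · subst huv
      simp only [swapColor, Function.comp_apply, Equiv.swap_apply_left,
        Equiv.swap_apply_right]
      constructor
      · rintro ⟨-, h⟩; exact absurd h.symm hne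
      · rintro (h | ⟨h, -⟩); exact absurd h hvw; exact absurd rfl h
    · simp only [swapColor, Function.comp_apply,
        Equiv.swap_apply_of_ne_of_ne huv huw, Equiv.swap_apply_right]
      constructor
      · rintro ⟨hu, hcu⟩
        refine Or.inr ⟨huv, hu, ?_⟩
        cases h1 : c u <;> cases h2 : c v <;> cases h3 : c w <;> simp_all
      · rintro (h | ⟨-, hu, hcu⟩); exact absurd h huw
        refine ⟨hu, ?_⟩
        cases h1 : c u <;> cases h2 : c v <;> cases h3 : c w <;> simp_all
  have hvf : v ∈ s.filter (fun u => ¬ c u = c w) := Finset.mem_filter.2 ⟨hvs, hne⟩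
  have hwnot : w ∉ (s.filter (fun u => ¬ c u = c w)).erase v := by
    simp [Finset.mem_erase]
  have hcard : (s.filter (fun u => swapColor c v w u = swapColor c v w w)).card
      = (s.filter (fun u => ¬ c u = c w)).card := by
    rw [key, Finset.card_insert_of_notMem hwnot, Finset.card_erase_of_mem hvf]
    have h1 : 1 ≤ (s.filter (fun u => ¬ c u = c w)).card := Finset.card_pos.2 ⟨v, hvf⟩
    omega
  have hsplit : (s.filter (fun u => ¬ c u = c w)).card
      = s.card - (s.filter (fun u => c u = c w)).card := by
    rw [Finset.filter_not, Finset.card_sdiff_of_subset (Finset.filter_subset _ _)]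
  have hle := Finset.card_filter_le s (fun u => c u = c w)
  have hpos : (0:ℝ) < (s.card : ℝ) := by exact_mod_cast closedNbhd_card_pos G w
  rw [frac, frac, ← hs, hcard, hsplit, Nat.cast_sub hle]
  field_simp

open scoped Classical in
lemma frac_swap_adj' {G : SimpleGraph V} {c : V → Bool} {v w : V}
    (hadj : G.Adj v w) (hne : c v ≠ c w) :
    frac G (swapColor c v w) v = 1 - frac G c v := by
  have h := frac_swap_adj hadj.symm (Ne.symm hne)
  rwa [show swapColor c w v = swapColor c v w by
    unfold swapColor; rw [Equiv.swap_comm]] at h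

/-- For any peak `Λ ≤ 1/2`, no profitable swap can occur between two agents
occupying adjacent nodes such that one is below the peak and the other above the peak. -/
theorem no_profitable_swap_adjacent_different_sides
    {V : Type*} [Fintype V] [DecidableEq V] (G : SimpleGraph V) (b : ℕ) (Λ : ℝ) (p : ℝ → ℝ)
    (hgame : IsGame G b Λ p) (hΛ : Λ ≤ 1 / 2)
    (c : V → Bool) (hc : IsProfile c b) (v w : V) (hadj : G.Adj v w)
    (hv : frac G c v < Λ) (hw : Λ < frac G c w) :
    ¬ ProfitableSwap G p c v w := by
  rintro ⟨hne, h1, h2⟩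
  obtain ⟨⟨hΛ0, hΛ1⟩, hp0, hmono, hpeak, hsymm⟩ := hgame.singlePeaked
  have ha0 : 0 ≤ frac G c v := frac_nonneg G c v
  have hd1 : frac G c w ≤ 1 := frac_le_one G c w
  set a := frac G c v with hadef
  set d := frac G c w with hddef
  rw [frac_swap_adj hadj hne] at h1
  rw [frac_swap_adj' hadj hne] at h2
  -- h1 : p (1 - d) > p a, h2 : p (1 - a) > p d
  have h1Λpos : 0 < 1 - Λ := by linarith
  have hmemda : (1 - a) ∈ Set.Icc Λ 1 := ⟨by linarith, by linarith⟩
  have hmemd : d ∈ Set.Icc Λ 1 := ⟨le_of_lt hw, hd1⟩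
  rw [hsymm _ hmemda, hsymm _ hmemd] at h2
  have hx : Λ * (1 - (1 - a)) / (1 - Λ) = Λ * a / (1 - Λ) := by ring_nf
  rw [hx] at h2
  have hxmem : Λ * a / (1 - Λ) ∈ Set.Icc (0:ℝ) Λ := by
    constructor
    · positivity
    · rw [div_le_iff₀ h1Λpos]; nlinarith
  have hymem : Λ * (1 - d) / (1 - Λ) ∈ Set.Icc (0:ℝ) Λ := by
    constructor
    · have : 0 ≤ 1 - d := by linarith
      positivity
    · rw [div_le_iff₀ h1Λpos]; nlinarith
  have hyx : Λ * (1 - d) / (1 - Λ) < Λ * a / (1 - Λ) := by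
    by_contra hle
    push_neg at hle
    exact absurd (hmono.monotoneOn hxmem hymem hle) (not_le.2 h2)
  have hmul : Λ * (1 - d) < Λ * a := by
    have := mul_lt_mul_of_pos_right hyx h1Λpos
    rwa [div_mul_cancel₀ _ h1Λpos.ne', div_mul_cancel₀ _ h1Λpos.ne'] at this
  have hda : 1 - d < a := lt_of_mul_lt_mul_left hmul hΛ0.le
  have hmem1d : (1 - d) ∈ Set.Icc (0:ℝ) Λ := ⟨by linarith, by linarith⟩
  have hmema : a ∈ Set.Icc (0:ℝ) Λ := ⟨ha0, hv.le⟩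
  have := hmono hmem1d hmema hda
  linarith

end SwapSchelling
end

section
/- For any peak Λ ≤ 1/2 and any swap Schelling game (G,b,Λ) on an almost regular graph G, every profitable swap strictly decreases the number Φ of monochromatic edges by at least 1; consequently, starting from any strategy profile, every sequence of profitable swaps is finite, has length at most m = |E|, and ends in a swap equilibrium. -/
open Finset

namespace SwapSchelling

variable {V : Type*} [Fintype V] [DecidableEq V]

set_option maxHeartbeats 1000000 in
lemma arith_main (k : ℝ) (hk0 : 0 < k) (hk1 : k ≤ 1)
    (sv sw R B e nv nw : ℕ) (he : e ≤ 1)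
    (hnv : nv = sv + R + 1 + e) (hnw : nw = sw + B + 1 + e)
    (hreg1 : nv ≤ nw + 1) (hreg2 : nw ≤ nv + 1)
    (h1 : min (((sv:ℝ)+1)/nv) (k * (1 - ((sv:ℝ)+1)/nv)) <
          min (((B:ℝ)+1)/nw) (k * (1 - ((B:ℝ)+1)/nw)))
    (h2 : min (((sw:ℝ)+1)/nw) (k * (1 - ((sw:ℝ)+1)/nw)) <
          min (((R:ℝ)+1)/nv) (k * (1 - ((R:ℝ)+1)/nv))) :
    R + B + 1 ≤ sv + sw := by
  have hnv1 : 1 ≤ nv := by omega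
  have hnw1 : 1 ≤ nw := by omega
  have hnv0 : (0:ℝ) < nv := by exact_mod_cast hnv1
  have hnw0 : (0:ℝ) < nw := by exact_mod_cast hnw1
  set α : ℝ := ((sv:ℝ)+1)/nv with hα
  set α' : ℝ := ((B:ℝ)+1)/nw with hα'
  set β : ℝ := ((sw:ℝ)+1)/nw with hβ
  set β' : ℝ := ((R:ℝ)+1)/nv with hβ'
  obtain ⟨h1a, h1b⟩ := lt_min_iff.mp h1
  obtain ⟨h2a, h2b⟩ := lt_min_iff.mp h2
  have hα0 : 0 ≤ α := by positivity
  have hβ0 : 0 ≤ β := by positivity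
  -- From branch choices derive facts
  have hcase1 : α ≤ k * (1-α) → α < α' ∧ α + α' < 1 := by
    intro h
    have hA : α < α' := by have := min_eq_left h ▸ h1a; linarith [min_eq_left h, h1a]
    have hB : α < k * (1 - α') := by rw [min_eq_left h] at h1b; exact h1b
    have h1' : 0 < 1 - α' := by nlinarith
    constructor
    · rw [min_eq_left h] at h1a; exact h1a
    · nlinarith
  have hcase1' : k * (1-α) ≤ α → α' < α := by
    intro h
    rw [min_eq_right h] at h1b
    nlinarith
  have hcase2 : β ≤ k * (1-β) → β < β' ∧ β + β' < 1 := by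
    intro h
    have hB : β < k * (1 - β') := by rw [min_eq_left h] at h2b; exact h2b
    have h1' : 0 < 1 - β' := by nlinarith
    constructor
    · rw [min_eq_left h] at h2a; exact h2a
    · nlinarith
  have hcase2' : k * (1-β) ≤ β → β' < β := by
    intro h
    rw [min_eq_right h] at h2b
    nlinarith
  have habp : α + β' = ((sv:ℝ) + R + 2)/nv := by rw [hα, hβ']; ring
  have habp1 : 1 ≤ α + β' := by
    rw [habp, le_div_iff₀ hnv0]
    have : (nv:ℝ) ≤ (sv:ℝ) + R + 2 := by
      have : nv ≤ sv + R + 2 := by omega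
      exact_mod_cast this
    linarith
  have hbap : β + α' = ((sw:ℝ) + B + 2)/nw := by rw [hβ, hα']; ring
  have hbap1 : 1 ≤ β + α' := by
    rw [hbap, le_div_iff₀ hnw0]
    have : (nw:ℝ) ≤ (sw:ℝ) + B + 2 := by
      have : nw ≤ sw + B + 2 := by omega
      exact_mod_cast this
    linarith
  rcases le_total α (k * (1-α)) with hA | hA <;> rcases le_total β (k * (1-β)) with hB | hB
  · obtain ⟨_, p2⟩ := hcase1 hA
    obtain ⟨_, q2⟩ := hcase2 hB
    linarith
  · -- α < α', β' < β
    obtain ⟨p1, _⟩ := hcase1 hA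
    have q1 := hcase2' hB
    have p1n : (sv+1) * nw < (B+1) * nv := by
      have := (div_lt_div_iff₀ hnv0 hnw0).mp p1
      exact_mod_cast this
    have q1n : (R+1) * nw < (sw+1) * nv := by
      have := (div_lt_div_iff₀ hnv0 hnw0).mp q1
      exact_mod_cast this
    subst hnv hnw
    interval_cases e <;> nlinarith [p1n, q1n]
  · -- α' < α, β < β'
    have p1 := hcase1' hA
    obtain ⟨q1, _⟩ := hcase2 hB
    have p1n : (B+1) * nv < (sv+1) * nw := by
      have := (div_lt_div_iff₀ hnw0 hnv0).mp p1
      exact_mod_cast this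
    have q1n : (sw+1) * nv < (R+1) * nw := by
      have := (div_lt_div_iff₀ hnw0 hnv0).mp q1
      exact_mod_cast this
    subst hnv hnw
    interval_cases e <;> nlinarith [p1n, q1n]
  · -- α' < α, β' < β
    have p1 := hcase1' hA
    have q1 := hcase2' hB
    have p1n : (B+1) * nv < (sv+1) * nw := by
      have := (div_lt_div_iff₀ hnw0 hnv0).mp p1
      exact_mod_cast this
    have q1n : (R+1) * nw < (sw+1) * nv := by
      have := (div_lt_div_iff₀ hnv0 hnw0).mp q1
      exact_mod_cast this
    rcases le_or_gt nv nw with hle | hlt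
    · have t1 : (sw+1) * nv ≤ (sw+1) * nw := Nat.mul_le_mul_left _ hle
      have key : nv * nw + 1 ≤ (sv+sw+1+e) * nw := by
        calc nv * nw + 1 = ((R+1) * nw + 1) + (sv+e) * nw := by rw [hnv]; ring
          _ ≤ (sw+1) * nv + (sv+e) * nw := by linarith [q1n]
          _ ≤ (sw+1) * nw + (sv+e) * nw := by linarith [t1]
          _ = (sv+sw+1+e) * nw := by ring
      have hlt2 : nv < sv + sw + 1 + e :=
        lt_of_mul_lt_mul_right (by omega) (Nat.zero_le nw)
      omega
    · have hle' : nw ≤ nv := le_of_lt hlt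
      have t1 : (sv+1) * nw ≤ (sv+1) * nv := Nat.mul_le_mul_left _ hle'
      have key : nv * nw + 1 ≤ (sv+sw+1+e) * nv := by
        calc nv * nw + 1 = ((B+1) * nv + 1) + (sw+e) * nv := by rw [hnw]; ring
          _ ≤ (sv+1) * nw + (sw+e) * nv := by linarith [p1n]
          _ ≤ (sv+1) * nv + (sw+e) * nv := by linarith [t1]
          _ = (sv+sw+1+e) * nv := by ring
      have hlt2 : nw < sv + sw + 1 + e := by
        have : nw * nv < (sv+sw+1+e) * nv := by rw [Nat.mul_comm nw nv]; omega
        exact lt_of_mul_lt_mul_right this (Nat.zero_le nv)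
      omega

lemma q_lt_of_p_lt {p : ℝ → ℝ} {Λ : ℝ} (hp : IsSinglePeaked p Λ) (hΛ : Λ ≤ 1/2)
    {x y : ℝ} (hx : x ∈ Set.Icc (0:ℝ) 1) (hy : y ∈ Set.Icc (0:ℝ) 1) (h : p y < p x) :
    min y (Λ/(1-Λ) * (1 - y)) < min x (Λ/(1-Λ) * (1 - x)) := by
  obtain ⟨hΛ0, hΛ1⟩ := hp.peak_mem
  have h1Λ : (0:ℝ) < 1 - Λ := by linarith
  set k : ℝ := Λ/(1-Λ) with hk
  have hk0 : 0 < k := by positivity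
  have key : ∀ t ∈ Set.Icc (0:ℝ) 1, p t = p (min t (k * (1-t))) ∧
      min t (k * (1-t)) ∈ Set.Icc (0:ℝ) Λ := by
    intro t ⟨ht0, ht1⟩
    rcases le_total t Λ with htΛ | htΛ
    · have hmin : min t (k * (1-t)) = t := by
        apply min_eq_left
        rw [hk, div_mul_eq_mul_div, le_div_iff₀ h1Λ]
        nlinarith
      rw [hmin]
      exact ⟨rfl, ht0, htΛ⟩
    · have hmin : min t (k * (1-t)) = k * (1-t) := by
        apply min_eq_right
        rw [hk, div_mul_eq_mul_div, div_le_iff₀ h1Λ]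
        nlinarith
      rw [hmin]
      refine ⟨?_, by nlinarith, ?_⟩
      · rw [hk, div_mul_eq_mul_div]
        exact hp.symm t ⟨htΛ, ht1⟩
      · have : k * (1-t) ≤ k * (1-Λ) := by
          apply mul_le_mul_of_nonneg_left (by linarith) (le_of_lt hk0)
        have hkΛ : k * (1-Λ) = Λ := by rw [hk]; field_simp
        linarith
  obtain ⟨hpx, hmx⟩ := key x hx
  obtain ⟨hpy, hmy⟩ := key y hy
  by_contra hcon
  push_neg at hcon
  rcases eq_or_lt_of_le hcon with heq | hlt
  · rw [hpx, hpy, heq] at h; exact lt_irrefl _ h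
  · have := hp.strictMonoOn hmx hmy hlt
    rw [hpx, hpy] at h
    linarith

open scoped Classical in
lemma closedNbhd_eq (G : SimpleGraph V) (v : V) :
    closedNbhd G v = insert v (univ.filter (fun u => G.Adj v u)) := by
  ext u
  simp [closedNbhd]

open scoped Classical in
lemma card_closedNbhd (G : SimpleGraph V) (v : V) :
    (closedNbhd G v).card = deg G v + 1 := by
  classical
  rw [closedNbhd_eq, card_insert_of_notMem (by simp), deg]

open scoped Classical in
lemma frac_mem_Icc (G : SimpleGraph V) (c : V → Bool) (v : V) :
    frac G c v ∈ Set.Icc (0:ℝ) 1 := by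
  classical
  have hv : v ∈ closedNbhd G v := by simp [closedNbhd]
  have hpos : (0:ℝ) < (closedNbhd G v).card := by
    have : 0 < (closedNbhd G v).card := card_pos.mpr ⟨v, hv⟩
    exact_mod_cast this
  constructor
  · apply div_nonneg _ (le_of_lt hpos)
    positivity
  · rw [frac, div_le_one hpos]
    exact_mod_cast card_le_card (filter_subset _ _)

open scoped Classical in
lemma edge_count (G : SimpleGraph V) (d : V → Bool) (x : V) :
    (G.edgeFinset.filter (fun e => (∀ u ∈ e, ∀ y ∈ e, d u = d y) ∧ x ∈ e)).card
      = ((univ.filter (fun u => G.Adj x u)).filter (fun u => d u = d x)).card := by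
  classical
  rw [eq_comm]
  apply Finset.card_bij (fun u _ => s(x, u))
  · intro u hu
    simp only [mem_filter, mem_univ, true_and] at hu
    obtain ⟨hadj, hd⟩ := hu
    simp only [mem_filter, SimpleGraph.mem_edgeFinset, SimpleGraph.mem_edgeSet]
    refine ⟨hadj, ?_, Sym2.mem_mk_left _ _⟩
    intro u' hu' y hy
    rw [Sym2.mem_iff] at hu' hy
    rcases hu' with rfl | rfl <;> rcases hy with rfl | rfl <;> simp [hd]
  · intro a _ b _ h
    exact Sym2.congr_right.mp h
  · intro e he
    simp only [mem_filter, SimpleGraph.mem_edgeFinset, SimpleGraph.mem_edgeSet] at he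
    obtain ⟨hadj, hmono, hx⟩ := he
    refine ⟨Sym2.Mem.other hx, ?_, Sym2.other_spec hx⟩
    simp only [mem_filter, mem_univ, true_and]
    constructor
    · rw [← Sym2.other_spec hx, SimpleGraph.mem_edgeSet] at hadj
      exact hadj
    · exact hmono _ (Sym2.other_mem hx) _ hx

lemma card_filter_split {γ : Type*} (s : Finset γ) (p q : γ → Prop)
    [DecidablePred p] [DecidablePred q] :
    (s.filter (fun x => p x)).card
      = (s.filter (fun x => p x ∧ q x)).card + (s.filter (fun x => p x ∧ ¬ q x)).card := by
  rw [← filter_filter, ← filter_filter, card_filter_add_card_filter_not]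

open scoped Classical in
lemma phi_split (G : SimpleGraph V) (d : V → Bool) (v w : V) (hvw : d v ≠ d w) :
    Phi G d = (G.edgeFinset.filter
        (fun e => (∀ u ∈ e, ∀ y ∈ e, d u = d y) ∧ v ∉ e ∧ w ∉ e)).card
      + ((univ.filter (fun u => G.Adj v u)).filter (fun u => d u = d v)).card
      + ((univ.filter (fun u => G.Adj w u)).filter (fun u => d u = d w)).card := by
  classical
  have step1 : Phi G d
      = (G.edgeFinset.filter (fun e => (∀ u ∈ e, ∀ y ∈ e, d u = d y) ∧ v ∈ e)).card
      + (G.edgeFinset.filter (fun e => (∀ u ∈ e, ∀ y ∈ e, d u = d y) ∧ v ∉ e)).card := by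
    rw [Phi]
    exact card_filter_split G.edgeFinset (fun e => ∀ u ∈ e, ∀ y ∈ e, d u = d y) (fun e => v ∈ e)
  have step2 : (G.edgeFinset.filter (fun e => (∀ u ∈ e, ∀ y ∈ e, d u = d y) ∧ v ∉ e)).card
      = (G.edgeFinset.filter (fun e => ((∀ u ∈ e, ∀ y ∈ e, d u = d y) ∧ v ∉ e) ∧ w ∈ e)).card
      + (G.edgeFinset.filter (fun e => ((∀ u ∈ e, ∀ y ∈ e, d u = d y) ∧ v ∉ e) ∧ w ∉ e)).card :=
    card_filter_split G.edgeFinset (fun e => (∀ u ∈ e, ∀ y ∈ e, d u = d y) ∧ v ∉ e) (fun e => w ∈ e)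
  have step3 : G.edgeFinset.filter (fun e => ((∀ u ∈ e, ∀ y ∈ e, d u = d y) ∧ v ∉ e) ∧ w ∈ e)
      = G.edgeFinset.filter (fun e => (∀ u ∈ e, ∀ y ∈ e, d u = d y) ∧ w ∈ e) := by
    apply filter_congr
    intro e _
    constructor
    · rintro ⟨⟨hm, _⟩, hw⟩; exact ⟨hm, hw⟩
    · rintro ⟨hm, hw⟩
      exact ⟨⟨hm, fun hv => hvw (hm v hv w hw)⟩, hw⟩
  have step4 : G.edgeFinset.filter (fun e => ((∀ u ∈ e, ∀ y ∈ e, d u = d y) ∧ v ∉ e) ∧ w ∉ e)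
      = G.edgeFinset.filter (fun e => (∀ u ∈ e, ∀ y ∈ e, d u = d y) ∧ v ∉ e ∧ w ∉ e) := by
    apply filter_congr
    intro e _
    simp [and_assoc]
  rw [step1, step2, step3, step4, edge_count, edge_count]
  ring

open scoped Classical in
lemma phi_drop (G : SimpleGraph V) (Λ : ℝ) (p : ℝ → ℝ)
    (hp : IsSinglePeaked p Λ) (hΛ : Λ ≤ 1/2)
    (hreg : maxDeg G ≤ minDeg G + 1)
    (c : V → Bool) (v w : V) (hps : ProfitableSwap G p c v w) :
    Phi G (swapColor c v w) + 1 ≤ Phi G c := by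
  classical
  obtain ⟨hvw, himp1, himp2⟩ := hps
  set c' : V → Bool := swapColor c v w with hc'def
  have hvwne : v ≠ w := fun h => hvw (h ▸ rfl)
  have hc'v : c' v = c w := by simp [hc'def, swapColor]
  have hc'w : c' w = c v := by simp [hc'def, swapColor]
  have hc' : ∀ u, u ≠ v → u ≠ w → c' u = c u := by
    intro u h1 h2
    simp [hc'def, swapColor, Equiv.swap_apply_of_ne_of_ne h1 h2]
  have hvw' : c' v ≠ c' w := by rw [hc'v, hc'w]; exact fun h => hvw h.symm
  -- the key cardinalities
  set nbrv : Finset V := univ.filter (fun u => G.Adj v u) with hnbrv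
  set nbrw : Finset V := univ.filter (fun u => G.Adj w u) with hnbrw
  set sv : ℕ := (nbrv.filter (fun u => c u = c v)).card with hsv
  set sw : ℕ := (nbrw.filter (fun u => c u = c w)).card with hsw
  set R : ℕ := (nbrv.filter (fun u => c' u = c' v)).card with hR
  set B : ℕ := (nbrw.filter (fun u => c' u = c' w)).card with hB
  set e : ℕ := if G.Adj v w then 1 else 0 with he
  have he1 : e ≤ 1 := by rw [he]; split <;> omega
  -- c'-filters described via c
  have hRalt : nbrv.filter (fun u => c' u = c' v) = nbrv.filter (fun u => u ≠ w ∧ c u = c w) := by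
    apply filter_congr
    intro u hu
    have huv : u ≠ v := by
      rintro rfl
      rw [hnbrv] at hu; simp at hu
    rw [hc'v]
    constructor
    · intro h
      by_cases hne : u = w
      · rw [hne, hc'w] at h; exact absurd h hvw
      · rw [hc' u huv hne] at h; exact ⟨hne, h⟩
    · rintro ⟨hne, h⟩
      rw [hc' u huv hne]; exact h
  have hBalt : nbrw.filter (fun u => c' u = c' w) = nbrw.filter (fun u => u ≠ v ∧ c u = c v) := by
    apply filter_congr
    intro u hu
    have huw : u ≠ w := by
      rintro rfl
      rw [hnbrw] at hu; simp at hu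
    rw [hc'w]
    constructor
    · intro h
      by_cases hne : u = v
      · rw [hne, hc'v] at h; exact absurd h.symm hvw
      · rw [hc' u hne huw] at h; exact ⟨hne, h⟩
    · rintro ⟨hne, h⟩
      rw [hc' u hne huw]; exact h
  -- the Bool complement
  have hbool : ∀ b : Bool, (¬ b = c v) ↔ b = c w := by
    intro b
    rcases b <;> rcases hcv : c v <;> rcases hcw : c w <;> simp_all
  have hboolw : ∀ b : Bool, (¬ b = c w) ↔ b = c v := by
    intro b
    rcases b <;> rcases hcv : c v <;> rcases hcw : c w <;> simp_all
  -- degree decompositions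
  have hdegv : deg G v = sv + R + e := by
    have h1 : deg G v = sv + (nbrv.filter (fun u => ¬ c u = c v)).card := by
      rw [deg, hsv, ← hnbrv, card_filter_add_card_filter_not]
    have h2 : nbrv.filter (fun u => ¬ c u = c v) = nbrv.filter (fun u => c u = c w) := by
      apply filter_congr; intro u _; exact hbool (c u)
    have h3 : (nbrv.filter (fun u => c u = c w)).card
        = (nbrv.filter (fun u => u ≠ w ∧ c u = c w)).card + e := by
      by_cases hadj : G.Adj v w
      · have hwmem : w ∈ nbrv := by rw [hnbrv]; simp [hadj]
        have : nbrv.filter (fun u => c u = c w)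
            = insert w (nbrv.filter (fun u => u ≠ w ∧ c u = c w)) := by
          ext u
          simp only [mem_filter, mem_insert]
          constructor
          · rintro ⟨hu, hc⟩
            rcases eq_or_ne u w with rfl | hne
            · exact Or.inl rfl
            · exact Or.inr ⟨hu, hne, hc⟩
          · rintro (rfl | ⟨hu, _, hc⟩)
            · exact ⟨hwmem, rfl⟩
            · exact ⟨hu, hc⟩
        rw [this, card_insert_of_notMem (by simp), he, if_pos hadj]
      · have hwmem : w ∉ nbrv := by rw [hnbrv]; simp [hadj]
        have : nbrv.filter (fun u => c u = c w)
            = nbrv.filter (fun u => u ≠ w ∧ c u = c w) := by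
          apply filter_congr; intro u hu
          have : u ≠ w := fun h => hwmem (h ▸ hu)
          simp [this]
        rw [this, he, if_neg hadj]
        omega
    rw [h1, h2, h3, ← hRalt, ← hR]
    omega
  have hdegw : deg G w = sw + B + e := by
    have h1 : deg G w = sw + (nbrw.filter (fun u => ¬ c u = c w)).card := by
      rw [deg, hsw, ← hnbrw, card_filter_add_card_filter_not]
    have h2 : nbrw.filter (fun u => ¬ c u = c w) = nbrw.filter (fun u => c u = c v) := by
      apply filter_congr; intro u _; exact hboolw (c u)
    have h3 : (nbrw.filter (fun u => c u = c v)).card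
        = (nbrw.filter (fun u => u ≠ v ∧ c u = c v)).card + e := by
      by_cases hadj : G.Adj v w
      · have hadj' : G.Adj w v := G.adj_symm hadj
        have hvmem : v ∈ nbrw := by rw [hnbrw]; simp [hadj']
        have : nbrw.filter (fun u => c u = c v)
            = insert v (nbrw.filter (fun u => u ≠ v ∧ c u = c v)) := by
          ext u
          simp only [mem_filter, mem_insert]
          constructor
          · rintro ⟨hu, hc⟩
            rcases eq_or_ne u v with rfl | hne
            · exact Or.inl rfl
            · exact Or.inr ⟨hu, hne, hc⟩
          · rintro (rfl | ⟨hu, _, hc⟩)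
            · exact ⟨hvmem, rfl⟩
            · exact ⟨hu, hc⟩
        rw [this, card_insert_of_notMem (by simp), he, if_pos hadj]
      · have hadj' : ¬ G.Adj w v := fun h => hadj (G.adj_symm h)
        have hvmem : v ∉ nbrw := by rw [hnbrw]; simp [hadj']
        have : nbrw.filter (fun u => c u = c v)
            = nbrw.filter (fun u => u ≠ v ∧ c u = c v) := by
          apply filter_congr; intro u hu
          have : u ≠ v := fun h => hvmem (h ▸ hu)
          simp [this]
        rw [this, he, if_neg hadj]
        omega
    rw [h1, h2, h3, ← hBalt, ← hB]
    omega
  -- frac formulas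
  have hfrac : ∀ (d : V → Bool) (x : V), frac G d x
      = (((univ.filter (fun u => G.Adj x u)).filter (fun u => d u = d x)).card + 1 : ℝ)
        / ((deg G x : ℝ) + 1) := by
    intro d x
    rw [frac, card_closedNbhd, closedNbhd_eq, filter_insert, if_pos rfl,
      card_insert_of_notMem (by simp)]
    push_cast
    ring
  -- regularity
  have hregvw : deg G v ≤ deg G w + 1 ∧ deg G w ≤ deg G v + 1 := by
    have h1 : deg G v ≤ maxDeg G := Finset.le_sup (mem_univ v)
    have h2 : deg G w ≤ maxDeg G := Finset.le_sup (mem_univ w)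
    have h3 : minDeg G ≤ deg G v := Nat.sInf_le ⟨v, rfl⟩
    have h4 : minDeg G ≤ deg G w := Nat.sInf_le ⟨w, rfl⟩
    omega
  -- utility to min inequalities
  obtain ⟨hΛ0, hΛ1⟩ := hp.peak_mem
  have h1Λ : (0:ℝ) < 1 - Λ := by linarith
  set k : ℝ := Λ/(1-Λ) with hk
  have hk0 : 0 < k := by positivity
  have hk1 : k ≤ 1 := by rw [hk, div_le_one h1Λ]; linarith
  have hq1 := q_lt_of_p_lt hp hΛ (frac_mem_Icc G c' w) (frac_mem_Icc G c v) himp1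
  have hq2 := q_lt_of_p_lt hp hΛ (frac_mem_Icc G c' v) (frac_mem_Icc G c w) himp2
  rw [hfrac c v, hfrac c' w] at hq1
  rw [hfrac c w, hfrac c' v] at hq2
  rw [← hnbrv, ← hsv] at hq1
  rw [← hnbrw, ← hB] at hq1
  rw [← hnbrw, ← hsw] at hq2
  rw [← hnbrv, ← hR] at hq2
  -- apply the arithmetic lemma
  have harith : R + B + 1 ≤ sv + sw := by
    apply arith_main k hk0 hk1 sv sw R B e (deg G v + 1) (deg G w + 1) he1
      (by omega) (by omega) (by omega) (by omega)
    · convert hq1 using 4 <;> push_cast <;> ring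
    · convert hq2 using 4 <;> push_cast <;> ring
  -- assemble via phi_split
  have hsplit1 := phi_split G c v w hvw
  have hsplit2 := phi_split G c' v w hvw'
  have hX : G.edgeFinset.filter (fun e => (∀ u ∈ e, ∀ y ∈ e, c' u = c' y) ∧ v ∉ e ∧ w ∉ e)
      = G.edgeFinset.filter (fun e => (∀ u ∈ e, ∀ y ∈ e, c u = c y) ∧ v ∉ e ∧ w ∉ e) := by
    apply filter_congr
    intro ed _
    have hmem : ∀ u ∈ ed, v ∉ ed → w ∉ ed → c' u = c u := by
      intro u hu hv hw
      exact hc' u (fun h => hv (h ▸ hu)) (fun h => hw (h ▸ hu))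
    constructor
    · rintro ⟨hm, hv, hw⟩
      refine ⟨?_, hv, hw⟩
      intro u hu y hy
      rw [← hmem u hu hv hw, ← hmem y hy hv hw]
      exact hm u hu y hy
    · rintro ⟨hm, hv, hw⟩
      refine ⟨?_, hv, hw⟩
      intro u hu y hy
      rw [hmem u hu hv hw, hmem y hy hv hw]
      exact hm u hu y hy
  rw [hsplit1, hsplit2, hX]
  rw [← hnbrv, ← hnbrw, ← hsv, ← hsw, ← hR, ← hB]
  omega

/-- On almost regular graphs with peak `Λ ≤ 1/2`: every profitable swap
decreases the number `Φ` of monochromatic edges by at least `1`; consequently every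
sequence of profitable swaps has length at most `m = |E|`, and from every strategy
profile some sequence of at most `m` profitable swaps ends in a swap equilibrium. -/
theorem finite_improvement_property_almost_regular
    {V : Type*} [Fintype V] [DecidableEq V] (G : SimpleGraph V) (b : ℕ) (Λ : ℝ) (p : ℝ → ℝ)
    (hgame : IsGame G b Λ p) (hΛ : Λ ≤ 1 / 2)
    (hreg : maxDeg G ≤ minDeg G + 1) :
    (∀ c : V → Bool, IsProfile c b → ∀ v w, ProfitableSwap G p c v w →
        Phi G (swapColor c v w) + 1 ≤ Phi G c) ∧
    (∀ (L : ℕ) (s : ℕ → V → Bool), IsProfile (s 0) b →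
        (∀ t < L, ∃ v w, ProfitableSwap G p (s t) v w ∧ s (t + 1) = swapColor (s t) v w) →
        L ≤ numEdges G) ∧
    (∀ c : V → Bool, IsProfile c b →
        ∃ (L : ℕ) (s : ℕ → V → Bool), s 0 = c ∧ L ≤ numEdges G ∧
          (∀ t < L, ∃ v w, ProfitableSwap G p (s t) v w ∧ s (t + 1) = swapColor (s t) v w) ∧
          IsSwapEquilibrium G p (s L)) := by
  classical
  have hdrop : ∀ (c : V → Bool) v w, ProfitableSwap G p c v w →
      Phi G (swapColor c v w) + 1 ≤ Phi G c :=
    fun c v w h => phi_drop G Λ p hgame.singlePeaked hΛ hreg c v w h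
  have hPhiLe : ∀ c : V → Bool, Phi G c ≤ numEdges G := by
    intro c
    have h1 : Phi G c ≤ G.edgeFinset.card := card_le_card (filter_subset _ _)
    have h2 : G.edgeFinset.card = numEdges G := by
      rw [numEdges]
      congr 1
      ext e
      simp [SimpleGraph.mem_edgeFinset]
    omega
  refine ⟨fun c _ v w h => hdrop c v w h, ?_, ?_⟩
  · intro L s _ hsteps
    have key : ∀ t, t ≤ L → Phi G (s t) + t ≤ Phi G (s 0) := by
      intro t
      induction t with
      | zero => intro _; omega
      | succ n ih =>
        intro hle
        obtain ⟨v, w, hvw, heq⟩ := hsteps n (by omega)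
        have hd := hdrop (s n) v w hvw
        rw [← heq] at hd
        have h2 := ih (by omega)
        omega
    have h3 := key L le_rfl
    have h4 := hPhiLe (s 0)
    omega
  · intro c hc
    suffices h : ∀ n (c : V → Bool), Phi G c = n →
        ∃ (L : ℕ) (s : ℕ → V → Bool), s 0 = c ∧ L ≤ Phi G c ∧
          (∀ t < L, ∃ v w, ProfitableSwap G p (s t) v w ∧ s (t + 1) = swapColor (s t) v w) ∧
          IsSwapEquilibrium G p (s L) by
      obtain ⟨L, s, h0, hL, hsteps, hse⟩ := h (Phi G c) c rfl
      exact ⟨L, s, h0, le_trans hL (hPhiLe c), hsteps, hse⟩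
    intro n
    induction n using Nat.strong_induction_on with
    | _ n ih =>
      intro c hphi
      by_cases hse : IsSwapEquilibrium G p c
      · exact ⟨0, fun _ => c, rfl, Nat.zero_le _, by intro t ht; omega, hse⟩
      · rw [IsSwapEquilibrium] at hse
        push_neg at hse
        obtain ⟨v, w, hvw⟩ := hse
        have hdrop2 := hdrop c v w hvw
        obtain ⟨L₂, s₂, h0₂, hL₂, hsteps₂, hse₂⟩ :=
          ih (Phi G (swapColor c v w)) (by omega) (swapColor c v w) rfl
        refine ⟨L₂ + 1, fun t => if t = 0 then c else s₂ (t - 1), by simp, by omega, ?_, ?_⟩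
        · intro t ht
          rcases Nat.eq_zero_or_pos t with rfl | htpos
          · refine ⟨v, w, by simpa using hvw, ?_⟩
            simp [h0₂]
          · obtain ⟨v', w', hvw', heq'⟩ := hsteps₂ (t - 1) (by omega)
            have ht0 : t ≠ 0 := by omega
            have ht1 : t + 1 ≠ 0 := by omega
            refine ⟨v', w', by simpa [ht0] using hvw', ?_⟩
            simp only [if_neg ht0, if_neg ht1]
            have htt : t + 1 - 1 = (t - 1) + 1 := by omega
            rw [htt, heq']
        · have hL0 : L₂ + 1 ≠ 0 := by omega
          simp only [if_neg hL0]
          have : L₂ + 1 - 1 = L₂ := by omega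
          rw [this]
          exact hse₂

end SwapSchelling
end

section
/- For every integer b > 1, there exists a swap Schelling game (G,b,Λ) on a bipartite graph G with n nodes, a swap equilibrium σ, and a strategy profile σ* such that DoI(σ*)/DoI(σ) ≥ n/(b+1); for b = 1 there exists such a game with DoI(σ*)/DoI(σ) ≥ (n−1)/3. -/
open Finset

namespace SwapSchelling

variable {V : Type*} [Fintype V] [DecidableEq V]

/-! ### Auxiliary lemmas for the construction -/

open scoped Classical in
lemma self_mem_closedNbhd (G : SimpleGraph V) (v : V) : v ∈ closedNbhd G v := by
  simp [closedNbhd]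

open scoped Classical in
lemma frac_ne_one_of_exists (G : SimpleGraph V) (c : V → Bool) (v u : V)
    (hu : u ∈ closedNbhd G v) (hne : c u ≠ c v) : frac G c v ≠ 1 := by
  have hvmem : v ∈ closedNbhd G v := self_mem_closedNbhd G v
  have hpos : 0 < (closedNbhd G v).card := Finset.card_pos.2 ⟨v, hvmem⟩
  have hsub : (closedNbhd G v).filter (fun u => c u = c v) ⊂ closedNbhd G v := by
    refine (Finset.ssubset_iff_of_subset (Finset.filter_subset _ _)).2 ⟨u, hu, ?_⟩
    simp [hne]
  have hlt := Finset.card_lt_card hsub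
  have h1 : frac G c v < 1 := by
    unfold frac
    rw [div_lt_one (by exact_mod_cast hpos)]
    exact_mod_cast hlt
  linarith

open scoped Classical in
lemma frac_eq_one_of_forall (G : SimpleGraph V) (c : V → Bool) (v : V)
    (h : ∀ u ∈ closedNbhd G v, c u = c v) : frac G c v = 1 := by
  have hvmem : v ∈ closedNbhd G v := self_mem_closedNbhd G v
  have hpos : 0 < (closedNbhd G v).card := Finset.card_pos.2 ⟨v, hvmem⟩
  unfold frac
  rw [Finset.filter_true_of_mem h, div_self]
  exact_mod_cast hpos.ne'

open scoped Classical in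
lemma frac_pair (G : SimpleGraph V) (c : V → Bool) (v w : V)
    (hN : closedNbhd G v = {v, w}) (hvw : v ≠ w) (hne : c w ≠ c v) :
    frac G c v = 1 / 2 := by
  unfold frac
  rw [hN]
  have h1 : ({v, w} : Finset V).filter (fun u => c u = c v) = {v} := by
    ext u
    simp only [Finset.mem_filter, Finset.mem_insert, Finset.mem_singleton]
    constructor
    · rintro ⟨h | h, hc⟩
      · exact h
      · exact absurd hc (by rw [h]; exact hne)
    · rintro rfl
      exact ⟨Or.inl rfl, rfl⟩
  rw [h1, Finset.card_singleton, Finset.card_insert_of_notMem (by simp [hvw]),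
    Finset.card_singleton]
  norm_num

open scoped Classical in
lemma card_filter_val_fin (n : ℕ) (p : ℕ → Prop) [DecidablePred p] :
    (univ.filter (fun v : Fin n => p v.val)).card = ((Finset.range n).filter p).card := by
  rw [← Finset.card_map Fin.valEmbedding]
  congr 1
  ext m
  simp only [Finset.mem_map, Finset.mem_filter, Finset.mem_range, Fin.valEmbedding_apply]
  constructor
  · rintro ⟨v, ⟨-, hp⟩, rfl⟩
    exact ⟨v.isLt, hp⟩
  · rintro ⟨hlt, hp⟩
    exact ⟨⟨m, hlt⟩, ⟨Finset.mem_univ _, hp⟩, rfl⟩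

/-! ### The construction: a double star -/

/-- Adjacency skeleton for the double-star graph on `{0, 1, ..., 2b}`:
node `0` is adjacent to `1, ..., b` and to `2b`; node `2b` is adjacent to
`b+1, ..., 2b-1`. -/
def lbAdj (b : ℕ) (i j : ℕ) : Prop :=
  (i = 0 ∧ 1 ≤ j ∧ j ≤ b) ∨ (i = 0 ∧ j = 2 * b ∧ 1 ≤ j) ∨
    (i = 2 * b ∧ b + 1 ≤ j ∧ j < 2 * b)

instance (b i j : ℕ) : Decidable (lbAdj b i j) := by unfold lbAdj; infer_instance

/-- The double-star graph. -/
def lbG (b : ℕ) : SimpleGraph (Fin (2 * b + 1)) where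
  Adj v w := lbAdj b v.val w.val ∨ lbAdj b w.val v.val
  symm := by constructor; intro v w h; exact h.symm
  loopless := by
    constructor; intro v h
    simp only [lbAdj, Fin.val_mk, true_and, and_true] at h
    omega

/-- The equilibrium coloring: blue on the leaves of node 0. -/
def cEq (b : ℕ) (v : Fin (2 * b + 1)) : Bool := decide (1 ≤ v.val ∧ v.val ≤ b)

/-- The integrated coloring: blue on node 0 and on the leaves of node `2b`. -/
def cOpt (b : ℕ) (v : Fin (2 * b + 1)) : Bool :=
  decide (v.val = 0 ∨ (b + 1 ≤ v.val ∧ v.val < 2 * b))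

/-- The tent utility function with peak 1/2. -/
noncomputable def pTent (x : ℝ) : ℝ := 1 - |2 * x - 1|

lemma pTent_le_one (x : ℝ) : pTent x ≤ 1 := by
  unfold pTent
  have := abs_nonneg (2 * x - 1)
  linarith

lemma pTent_half : pTent (1 / 2) = 1 := by unfold pTent; norm_num

lemma pTent_singlePeaked : IsSinglePeaked pTent (1 / 2) := by
  constructor
  · constructor <;> norm_num
  · unfold pTent
    rw [show (2 : ℝ) * 0 - 1 = -1 by ring, abs_neg, abs_one]; ring
  · intro x hx y hy hxy
    simp only [Set.mem_Icc] at hx hy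
    unfold pTent
    rw [abs_of_nonpos (by linarith [hx.2]), abs_of_nonpos (by linarith [hy.2])]
    linarith
  · exact pTent_half
  · intro x _
    have harg : (1 / 2 : ℝ) * (1 - x) / (1 - 1 / 2) = 1 - x := by ring
    rw [harg]
    unfold pTent
    rw [show (2 : ℝ) * (1 - x) - 1 = -(2 * x - 1) by ring, abs_neg]

section DoubleStar

open scoped Classical

/-- Node `0` of the double star (the center of the blue-leaf star). -/
def z0 (b : ℕ) : Fin (2 * b + 1) := ⟨0, Nat.succ_pos _⟩
/-- Node `2b` of the double star (the center of the red-leaf star). -/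
def z1 (b : ℕ) : Fin (2 * b + 1) := ⟨2 * b, Nat.lt_succ_self _⟩

variable (b : ℕ) (hb : 1 ≤ b)

lemma mem_closedNbhd_lbG (v u : Fin (2 * b + 1)) :
    u ∈ closedNbhd (lbG b) v ↔
      u = v ∨ lbAdj b v.val u.val ∨ lbAdj b u.val v.val := by
  unfold closedNbhd; rw [Finset.mem_filter]; exact ⟨fun h => h.2, fun h => ⟨Finset.mem_univ _, h⟩⟩

lemma closedNbhd_leaf0 (v : Fin (2 * b + 1)) (h1 : 1 ≤ v.val) (h2 : v.val ≤ b) :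
    closedNbhd (lbG b) v = {v, z0 b} := by
  ext u
  rw [mem_closedNbhd_lbG]
  simp only [Finset.mem_insert, Finset.mem_singleton, lbAdj, Fin.ext_iff, z0, Fin.val_mk, true_and, and_true]
  omega

lemma closedNbhd_leaf1 (v : Fin (2 * b + 1)) (h1 : b + 1 ≤ v.val) (h2 : v.val < 2 * b) :
    closedNbhd (lbG b) v = {v, z1 b} := by
  ext u
  rw [mem_closedNbhd_lbG]
  simp only [Finset.mem_insert, Finset.mem_singleton, lbAdj, Fin.ext_iff, z1, Fin.val_mk, true_and, and_true]
  omega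

lemma cEq_frac_blue (v : Fin (2 * b + 1)) (hv : cEq b v = true) :
    frac (lbG b) (cEq b) v = 1 / 2 := by
  rw [cEq, decide_eq_true_iff] at hv
  apply frac_pair _ _ _ (z0 b) (closedNbhd_leaf0 b v hv.1 hv.2)
  · simp only [ne_eq, Fin.ext_iff, z0, Fin.val_mk, true_and, and_true]; omega
  · simp only [cEq, z0, ne_eq, decide_eq_decide, Fin.val_mk, true_and, and_true]
    simp <;> omega

lemma lbG_swapEquilibrium : IsSwapEquilibrium (lbG b) pTent (cEq b) := by
  rintro v w ⟨hne, h1, h2⟩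
  rcases Bool.eq_false_or_eq_true (cEq b v) with hv | hv
  · have hfr := cEq_frac_blue b v hv
    rw [hfr, pTent_half] at h1
    exact absurd h1 (not_lt.2 (pTent_le_one _))
  · have hw : cEq b w = true := by
      cases hcw : cEq b w
      · rw [hv, hcw] at hne; exact (hne rfl).elim
      · rfl
    have hfr := cEq_frac_blue b w hw
    rw [hfr, pTent_half] at h2
    exact absurd h2 (not_lt.2 (pTent_le_one _))

lemma lbG_connected : (lbG b).Connected := by
  rw [SimpleGraph.connected_iff]
  refine ⟨?_, ⟨z0 b⟩⟩
  have hreach : ∀ v : Fin (2 * b + 1), (lbG b).Reachable (z0 b) v := by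
    intro v
    rcases Nat.lt_or_ge v.val 1 with h | h
    · have hv : v = z0 b := by simp only [Fin.ext_iff, z0, Fin.val_mk, true_and, and_true]; omega
      rw [hv]
    · rcases Nat.lt_or_ge v.val (b + 1) with h' | h'
      · have hadj : (lbG b).Adj (z0 b) v := by
          left; simp only [lbAdj, z0, Fin.val_mk, true_and, and_true]; omega
        exact hadj.reachable
      · rcases Nat.lt_or_ge v.val (2 * b) with h'' | h''
        · have hadj1 : (lbG b).Adj (z0 b) (z1 b) := by
            left; simp only [lbAdj, z0, z1, Fin.val_mk, true_and, and_true]; omega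
          have hadj2 : (lbG b).Adj (z1 b) v := by
            left; simp only [lbAdj, z1, Fin.val_mk, true_and, and_true]; omega
          exact hadj1.reachable.trans hadj2.reachable
        · have hv : v = z1 b := by
            simp only [Fin.ext_iff, z1, Fin.val_mk, true_and, and_true]
            have := v.isLt
            omega
          have hadj : (lbG b).Adj (z0 b) v := by
            left; simp only [lbAdj, z0, hv, z1, Fin.val_mk, true_and, and_true]; omega
          exact hadj.reachable
  intro u v
  exact (hreach u).symm.trans (hreach v)

lemma lbG_colorable : (lbG b).Colorable 2 := by
  refine ⟨SimpleGraph.Coloring.mk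
    (fun v => if v.val = 0 ∨ (b + 1 ≤ v.val ∧ v.val < 2 * b) then 0 else 1) ?_⟩
  intro u v huv heq
  rcases huv with (⟨h1, h2, h3⟩ | ⟨h1, h2, h3⟩ | ⟨h1, h2, h3⟩) |
      (⟨h1, h2, h3⟩ | ⟨h1, h2, h3⟩ | ⟨h1, h2, h3⟩)
  · rw [if_pos (by omega), if_neg (by omega)] at heq; exact absurd heq (by decide)
  · rw [if_pos (by omega), if_neg (by omega)] at heq; exact absurd heq (by decide)
  · rw [if_neg (by omega), if_pos (by omega)] at heq; exact absurd heq (by decide)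
  · rw [if_neg (by omega), if_pos (by omega)] at heq; exact absurd heq (by decide)
  · rw [if_neg (by omega), if_pos (by omega)] at heq; exact absurd heq (by decide)
  · rw [if_pos (by omega), if_neg (by omega)] at heq; exact absurd heq (by decide)

include hb in
lemma lbG_isGame : IsGame (lbG b) b (1 / 2) pTent := by
  refine ⟨lbG_connected b, hb, ?_, pTent_singlePeaked⟩
  simp only [Fintype.card_fin]
  omega

lemma cEq_profile : IsProfile (cEq b) b := by
  unfold IsProfile
  have h1 : (univ.filter (fun v : Fin (2 * b + 1) => cEq b v = true)) =
      (univ.filter (fun v : Fin (2 * b + 1) => 1 ≤ v.val ∧ v.val ≤ b)) := by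
    apply Finset.filter_congr
    intro v _
    simp [cEq]
  rw [h1, card_filter_val_fin (2 * b + 1) (fun m => 1 ≤ m ∧ m ≤ b)]
  have h2 : (Finset.range (2 * b + 1)).filter (fun m => 1 ≤ m ∧ m ≤ b) =
      Finset.Ico 1 (b + 1) := by
    ext m
    simp only [Finset.mem_filter, Finset.mem_range, Finset.mem_Ico]
    omega
  rw [h2, Nat.card_Ico]
  omega

include hb in
lemma cOpt_profile : IsProfile (cOpt b) b := by
  unfold IsProfile
  have h1 : (univ.filter (fun v : Fin (2 * b + 1) => cOpt b v = true)) =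
      (univ.filter (fun v : Fin (2 * b + 1) =>
        v.val = 0 ∨ (b + 1 ≤ v.val ∧ v.val < 2 * b))) := by
    apply Finset.filter_congr
    intro v _
    simp [cOpt]
  rw [h1, card_filter_val_fin (2 * b + 1)
    (fun m => m = 0 ∨ (b + 1 ≤ m ∧ m < 2 * b))]
  have h2 : (Finset.range (2 * b + 1)).filter (fun m => m = 0 ∨ (b + 1 ≤ m ∧ m < 2 * b)) =
      insert 0 (Finset.Ico (b + 1) (2 * b)) := by
    ext m
    simp only [Finset.mem_filter, Finset.mem_range, Finset.mem_insert, Finset.mem_Ico]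
    omega
  rw [h2, Finset.card_insert_of_notMem (by simp), Nat.card_Ico]
  omega

include hb in
lemma cEq_frac_classify (v : Fin (2 * b + 1)) :
    frac (lbG b) (cEq b) v ≠ 1 ↔ v.val ≤ b := by
  rcases Nat.lt_or_ge v.val 1 with h | h
  · -- v = z0 : non-segregated (node 1 is a blue neighbor)
    have hv : v = z0 b := by simp only [Fin.ext_iff, z0, Fin.val_mk, true_and, and_true]; omega
    subst hv
    have hmem : (⟨1, by omega⟩ : Fin (2 * b + 1)) ∈ closedNbhd (lbG b) (z0 b) := by
      rw [mem_closedNbhd_lbG]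
      right; left
      simp only [lbAdj, z0, Fin.val_mk, true_and, and_true]
      omega
    have hne : cEq b ⟨1, by omega⟩ ≠ cEq b (z0 b) := by
      simp only [cEq, z0, ne_eq, decide_eq_decide, Fin.val_mk, true_and, and_true]
      simp <;> omega
    simp only [z0, Fin.val_mk, true_and, and_true]
    exact ⟨fun _ => by omega, fun _ => frac_ne_one_of_exists _ _ _ _ hmem hne⟩
  · rcases Nat.lt_or_ge v.val (b + 1) with h' | h'
    · -- blue leaf : frac = 1/2
      have hfr := cEq_frac_blue b v (by simp only [cEq, decide_eq_true_iff]; omega)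
      rw [hfr]
      constructor
      · intro _; omega
      · intro _; norm_num
    · rcases Nat.lt_or_ge v.val (2 * b) with h'' | h''
      · -- red leaf of z1 : segregated
        have hseg : frac (lbG b) (cEq b) v = 1 := by
          apply frac_eq_one_of_forall
          intro u hu
          rw [closedNbhd_leaf1 b v h' h''] at hu
          simp only [Finset.mem_insert, Finset.mem_singleton] at hu
          rcases hu with rfl | rfl
          · rfl
          · simp only [cEq, z1, decide_eq_decide, Fin.val_mk, true_and, and_true]; exact decide_eq_decide.mpr (by omega)
        rw [hseg]
        constructor
        · intro hcon; exact absurd rfl hcon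
        · intro hcase; omega
      · -- v = z1 : segregated
        have hv : v = z1 b := by
          simp only [Fin.ext_iff, z1, Fin.val_mk, true_and, and_true]
          have := v.isLt
          omega
        subst hv
        have hseg : frac (lbG b) (cEq b) (z1 b) = 1 := by
          apply frac_eq_one_of_forall
          intro u hu
          rw [mem_closedNbhd_lbG] at hu
          simp only [cEq, z1, decide_eq_decide, Fin.val_mk, true_and, and_true]
          rcases hu with rfl | hu | hu <;> simp only [lbAdj, z1, Fin.val_mk, true_and, and_true] at * <;> exact decide_eq_decide.mpr (by omega)
        rw [hseg]
        simp only [z1, Fin.val_mk, true_and, and_true]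
        constructor
        · intro hcon; exact absurd rfl hcon
        · intro hcase; omega

include hb in
lemma cEq_DoI : DoI (lbG b) (cEq b) = b + 1 := by
  unfold DoI
  have h1 : (univ.filter (fun v : Fin (2 * b + 1) => frac (lbG b) (cEq b) v ≠ 1)) =
      (univ.filter (fun v : Fin (2 * b + 1) => v.val ≤ b)) := by
    apply Finset.filter_congr
    intro v _
    exact cEq_frac_classify b hb v
  rw [h1, card_filter_val_fin (2 * b + 1) (fun m => m ≤ b)]
  have h2 : (Finset.range (2 * b + 1)).filter (fun m => m ≤ b) =
      Finset.range (b + 1) := by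
    ext m
    simp only [Finset.mem_filter, Finset.mem_range]
    omega
  rw [h2, Finset.card_range]

lemma cOpt_z0 (b : ℕ) : cOpt b (z0 b) = true := decide_eq_true (Or.inl rfl)

lemma cOpt_z1 (b : ℕ) (hb : 1 ≤ b) : cOpt b (z1 b) = false := by
  apply decide_eq_false
  simp only [z1, Fin.val_mk]
  omega

include hb in
lemma cOpt_DoI : DoI (lbG b) (cOpt b) = 2 * b + 1 := by
  unfold DoI
  have hall : ∀ v : Fin (2 * b + 1), v ∈ univ → frac (lbG b) (cOpt b) v ≠ 1 := by
    intro v _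
    rcases Nat.lt_or_ge v.val 1 with h | h
    · -- v = z0 blue ; its neighbor z1 is red
      have hv : v = z0 b := by simp only [Fin.ext_iff, z0, Fin.val_mk, true_and, and_true]; omega
      subst hv
      refine frac_ne_one_of_exists _ _ _ (z1 b) ?_ ?_
      · rw [mem_closedNbhd_lbG]; right; left
        simp only [lbAdj, z0, z1, Fin.val_mk, true_and, and_true]; omega
      · simp [cOpt_z0, cOpt_z1 b hb]
    · rcases Nat.lt_or_ge v.val (b + 1) with h' | h'
      · -- leaf of z0 : red ; neighbor z0 is blue
        refine frac_ne_one_of_exists _ _ _ (z0 b) ?_ ?_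
        · rw [closedNbhd_leaf0 b v h (by omega)]; simp
        · have hvf : cOpt b v = false := decide_eq_false (by omega)
          simp [cOpt_z0, hvf]
      · rcases Nat.lt_or_ge v.val (2 * b) with h'' | h''
        · -- leaf of z1 : blue ; neighbor z1 is red
          refine frac_ne_one_of_exists _ _ _ (z1 b) ?_ ?_
          · rw [closedNbhd_leaf1 b v h' h'']; simp
          · simp only [cOpt, z1, ne_eq, decide_eq_decide, Fin.val_mk, true_and, and_true]; exact fun h => absurd (decide_eq_decide.mp h) (by omega)
        · -- v = z1 red ; its neighbor z0 is blue
          have hv : v = z1 b := by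
            simp only [Fin.ext_iff, z1, Fin.val_mk, true_and, and_true]
            have := v.isLt
            omega
          subst hv
          refine frac_ne_one_of_exists _ _ _ (z0 b) ?_ ?_
          · rw [mem_closedNbhd_lbG]; right; right
            simp only [lbAdj, z0, z1, Fin.val_mk, true_and, and_true]; omega
          · simp [cOpt_z0, cOpt_z1 b hb]
  rw [Finset.filter_true_of_mem hall, Finset.card_univ, Fintype.card_fin]

end DoubleStar

theorem price_of_anarchy_lower_bound_bipartite_aux (b : ℕ) (hb : 1 ≤ b) :
    ∃ (G : SimpleGraph (Fin (2 * b + 1))) (Λ : ℝ) (p : ℝ → ℝ),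
      IsGame G b Λ p ∧ G.Colorable 2 ∧
      ∃ c cstar : Fin (2 * b + 1) → Bool, IsProfile c b ∧ IsProfile cstar b ∧
        IsSwapEquilibrium G p c ∧
        DoI G cstar = 2 * b + 1 ∧ DoI G c = b + 1 :=
  ⟨lbG b, 1 / 2, pTent, lbG_isGame b hb, lbG_colorable b,
    cEq b, cOpt b, cEq_profile b, cOpt_profile b hb, lbG_swapEquilibrium b,
    cOpt_DoI b hb, cEq_DoI b hb⟩

/-- For every `b > 1` there is a game on a bipartite graph with a swap
equilibrium `σ` and a profile `σ*` with `DoI(σ*)/DoI(σ) ≥ n/(b+1)`; for `b = 1` there is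
such a game with `DoI(σ*)/DoI(σ) ≥ (n-1)/3`. -/
theorem price_of_anarchy_lower_bound_bipartite :
    (∀ b : ℕ, 1 < b →
      ∃ (n : ℕ) (G : SimpleGraph (Fin n)) (Λ : ℝ) (p : ℝ → ℝ),
        IsGame G b Λ p ∧ G.Colorable 2 ∧
        ∃ c cstar : Fin n → Bool, IsProfile c b ∧ IsProfile cstar b ∧
          IsSwapEquilibrium G p c ∧
          (n : ℝ) / ((b : ℝ) + 1) ≤ (DoI G cstar : ℝ) / (DoI G c : ℝ)) ∧
    (∃ (n : ℕ) (G : SimpleGraph (Fin n)) (Λ : ℝ) (p : ℝ → ℝ),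
        IsGame G 1 Λ p ∧ G.Colorable 2 ∧
        ∃ c cstar : Fin n → Bool, IsProfile c 1 ∧ IsProfile cstar 1 ∧
          IsSwapEquilibrium G p c ∧
          ((n : ℝ) - 1) / 3 ≤ (DoI G cstar : ℝ) / (DoI G c : ℝ)) := by
  constructor
  · intro b hbgt
    obtain ⟨G, Λ, p, hgame, hcol, c, cstar, hc, hcstar, heq, hdoi1, hdoi2⟩ :=
      price_of_anarchy_lower_bound_bipartite_aux b (le_of_lt hbgt)
    refine ⟨2 * b + 1, G, Λ, p, hgame, hcol, c, cstar, hc, hcstar, heq, ?_⟩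
    rw [hdoi1, hdoi2]
    push_cast
    exact le_refl _
  · obtain ⟨G, Λ, p, hgame, hcol, c, cstar, hc, hcstar, heq, hdoi1, hdoi2⟩ :=
      price_of_anarchy_lower_bound_bipartite_aux 1 le_rfl
    refine ⟨2 * 1 + 1, G, Λ, p, hgame, hcol, c, cstar, hc, hcstar, heq, ?_⟩
    rw [hdoi1, hdoi2]
    norm_num

end SwapSchelling
end
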